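/- For every real α with α ≠ 1, there exist a finite set V, a symmetric submodular function f : 2^V → ℝ, and an α-ordering (v_1, …, v_n) of V with respect to f such that (v_{n−1}, v_n) is not a flat pair with respect to f. -/

import Mathlib

open Finset

def Submodular {V : Type*} [DecidableEq V] [Fintype V] (f : Finset V → ℝ) : Prop :=
  ∀ X Y : Finset V, f X + f Y ≥ f (X ∪ Y) + f (X ∩ Y)

def prefSet {V : Type*} [DecidableEq V] {n : ℕ} (v : Fin n → V) (i : Fin n) : Finset V :=
  (Finset.univ.filter (fun k : Fin n => k < i)).image v

def IsAlphaOrdering {V : Type*} [DecidableEq V] {n : ℕ} (α : ℝ)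
    (f : Finset V → ℝ) (v : Fin n → V) : Prop :=
  ∀ i j : Fin n, i ≤ j →
    f (insert (v i) (prefSet v i)) + α * f {v i} ≤
      f (insert (v j) (prefSet v i)) + α * f {v j}

def FlatPair {V : Type*} [DecidableEq V] [Fintype V]
    (f : Finset V → ℝ) (u w : V) : Prop :=
  ∀ X : Finset V, X ⊂ Finset.univ → (X ∩ ({u, w} : Finset V)).card = 1 →
    ∀ hX : X.Nonempty, X.inf' hX (fun x => f {x}) ≤ f X

/-- Indicator (as a real number) that the edge `{i,j}` crosses the cut `(X, Xᶜ)`. -/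
noncomputable def cross (i j : Fin 4) (X : Finset (Fin 4)) : ℝ :=
  if (i ∈ X ↔ j ∈ X) then 0 else 1

lemma cross_compl (i j : Fin 4) (X : Finset (Fin 4)) : cross i j Xᶜ = cross i j X := by
  simp [cross, Finset.mem_compl, not_iff_not]

lemma cross_submod (i j : Fin 4) (X Y : Finset (Fin 4)) :
    cross i j (X ∪ Y) + cross i j (X ∩ Y) ≤ cross i j X + cross i j Y := by
  by_cases h1 : i ∈ X <;> by_cases h2 : i ∈ Y <;> by_cases h3 : j ∈ X <;> by_cases h4 : j ∈ Y <;>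
    simp [cross, Finset.mem_union, Finset.mem_inter, h1, h2, h3, h4]

/-- Cut function of the weighted graph on 4 vertices with edge weights
`a = w01, b = w02, c = w03, d = w12, e = w13, g = w23`. -/
noncomputable def cf (a b c d e g : ℝ) (X : Finset (Fin 4)) : ℝ :=
  a * cross 0 1 X + b * cross 0 2 X + c * cross 0 3 X +
  d * cross 1 2 X + e * cross 1 3 X + g * cross 2 3 X

/-- Master lemma: for nonnegative weights satisfying the six `α`-ordering
inequalities and the two violation inequalities, the cut function on `Fin 4`
with the identity ordering witnesses the theorem. -/
lemma master (α a b c d e g : ℝ)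
    (ha : 0 ≤ a) (hb : 0 ≤ b) (hc : 0 ≤ c) (hd : 0 ≤ d) (he : 0 ≤ e) (hg : 0 ≤ g)
    (H1 : a + b + c + α * (a + b + c) ≤ a + d + e + α * (a + d + e))
    (H2 : a + b + c + α * (a + b + c) ≤ b + d + g + α * (b + d + g))
    (H3 : a + b + c + α * (a + b + c) ≤ c + e + g + α * (c + e + g))
    (H4 : b + c + d + e + α * (a + d + e) ≤ a + c + d + g + α * (b + d + g))
    (H5 : b + c + d + e + α * (a + d + e) ≤ a + b + e + g + α * (c + e + g))
    (H6 : c + e + g + α * (b + d + g) ≤ b + d + g + α * (c + e + g))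
    (Hv1 : a + b + e + g < a + d + e)
    (Hv2 : a + b + e + g < b + d + g) :
    ∃ (n : ℕ) (hn : 2 ≤ n) (f : Finset (Fin n) → ℝ) (v : Fin n → Fin n),
      (∀ X : Finset (Fin n), f X = f Xᶜ) ∧ Submodular f ∧
      Function.Bijective v ∧ IsAlphaOrdering α f v ∧
      ¬ FlatPair f (v ⟨n - 2, Nat.sub_lt (by omega) two_pos⟩)
        (v ⟨n - 1, Nat.sub_lt (by omega) one_pos⟩) := by
  refine ⟨4, by norm_num, cf a b c d e g, id, ?_, ?_, Function.bijective_id, ?_, ?_⟩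
  · intro X
    simp [cf, cross_compl]
  · intro X Y
    have k1 := mul_le_mul_of_nonneg_left (cross_submod 0 1 X Y) ha
    have k2 := mul_le_mul_of_nonneg_left (cross_submod 0 2 X Y) hb
    have k3 := mul_le_mul_of_nonneg_left (cross_submod 0 3 X Y) hc
    have k4 := mul_le_mul_of_nonneg_left (cross_submod 1 2 X Y) hd
    have k5 := mul_le_mul_of_nonneg_left (cross_submod 1 3 X Y) he
    have k6 := mul_le_mul_of_nonneg_left (cross_submod 2 3 X Y) hg
    rw [mul_add, mul_add] at k1 k2 k3 k4 k5 k6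
    simp only [cf, ge_iff_le]
    linarith
  · intro i j hij
    fin_cases i <;> fin_cases j <;>
      simp (config := { decide := true }) [cf, cross, prefSet, Fin.le_def] at hij ⊢ <;>
      linarith
  · intro hfp
    have h := hfp {1, 2} (by decide) (by decide) ⟨1, by decide⟩
    have e1 : cf a b c d e g {(1 : Fin 4)} = a + d + e := by
      simp (config := { decide := true }) [cf, cross]
    have e2 : cf a b c d e g {(2 : Fin 4)} = b + d + g := by
      simp (config := { decide := true }) [cf, cross]
    have e12 : cf a b c d e g {1, 2} = a + b + e + g := by
      simp (config := { decide := true }) [cf, cross]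
    have hinf : ({1, 2} : Finset (Fin 4)).inf' ⟨1, by decide⟩
        (fun x => cf a b c d e g {x}) =
        min (cf a b c d e g {(1 : Fin 4)}) (cf a b c d e g {(2 : Fin 4)}) := by
      simp [Finset.inf'_insert]
    rw [hinf, e1, e2, e12] at h
    rcases min_le_iff.mp h with h' | h' <;> linarith

/-- Proposition 6.3: for any `α ≠ 1` there are a finite ground set, a symmetric
submodular function `f`, and an `α`-ordering of the ground set with respect to `f`
whose last two elements do not form a flat pair. -/
theorem stmt_10 (α : ℝ) (hα : α ≠ 1) :
    ∃ (n : ℕ) (hn : 2 ≤ n) (f : Finset (Fin n) → ℝ) (v : Fin n → Fin n),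
      (∀ X : Finset (Fin n), f X = f Xᶜ) ∧ Submodular f ∧
      Function.Bijective v ∧ IsAlphaOrdering α f v ∧
      ¬ FlatPair f (v ⟨n - 2, by omega⟩) (v ⟨n - 1, by omega⟩) := by
  rcases lt_or_gt_of_ne hα with h1 | h1
  · rcases lt_or_ge α (-1) with h2 | h2
    · -- regime C : α < -1, weights (2, 2, 1-α, 1-α, 0, 0)
      refine master α 2 2 (1 - α) (1 - α) 0 0 (by norm_num) (by norm_num)
        (by linarith) (by linarith) le_rfl le_rfl ?_ ?_ ?_ ?_ ?_ ?_ ?_ ?_ <;> nlinarith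
    · -- regime A : -1 ≤ α < 1, weights (s, 0, 0, s+1, 0, s), s = (1+α)/(1-α)
      set s : ℝ := (1 + α) / (1 - α) with hs
      have h1' : (0 : ℝ) < 1 - α := by linarith
      have hs0 : 0 ≤ s := div_nonneg (by linarith) (by linarith)
      have hkey : s * (1 - α) = 1 + α := by
        rw [hs]; exact div_mul_cancel₀ _ (by linarith)
      refine master α s 0 0 (s + 1) 0 s hs0 le_rfl le_rfl (by linarith) le_rfl hs0
        ?_ ?_ ?_ ?_ ?_ ?_ ?_ ?_ <;> nlinarith
  · -- regime B : α > 1, weights (0, 0, m, (m+1)/2, (m-1)/2, (m-1)/2), m = (α+1)/(α-1)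
    set m : ℝ := (α + 1) / (α - 1) with hm
    have h1' : (0 : ℝ) < α - 1 := by linarith
    have hm1 : 1 ≤ m := by
      rw [hm, le_div_iff₀ h1']
      linarith
    have hkey : m * (α - 1) = α + 1 := by
      rw [hm]; exact div_mul_cancel₀ _ (by linarith)
    refine master α 0 0 m ((m + 1) / 2) ((m - 1) / 2) ((m - 1) / 2) le_rfl le_rfl
      (by linarith) (by linarith) (by linarith) (by linarith) ?_ ?_ ?_ ?_ ?_ ?_ ?_ ?_ <;>
      nlinarith
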